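/- Let g be a Lie algebra with a ℤ^n-grading g = ⊕_{α∈ℤ^n} g_α such that g_0 is abelian, [g_α, g_β] = g_{α+β} for all α ≠ β, and the grading is the root space decomposition with respect to g_0. Let V be a simple mixed weight g-module, λ ∈ supp(V), and Λ = λ + ℤ^n. Let μ_1,…,μ_k ∈ supp^fin(V) and a_1,…,a_k be positive real numbers with a_1 + ⋯ + a_k = 1, and suppose μ := a_1 μ_1 + ⋯ + a_k μ_k (a convex combination formed inside the real affine space containing the lattice coset Λ) lies in Λ. Then either μ = 0 (the zero weight) or μ ∈ supp^fin(V) (that is, dim V_μ < ∞). -/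

import Mathlib

/-! Preamble: `ℤⁿ`-graded Lie algebras whose grading is the root space
decomposition with respect to the abelian zero component, together with
weight modules, supports and related notions. -/

/-- The dot product `a · x` of a real vector with an integer vector. -/
def rdot {n : ℕ} (a : Fin n → ℝ) (x : Fin n → ℤ) : ℝ := ∑ i, a i * (x i : ℝ)

/-- A `ℤⁿ`-grading `g = ⊕ g_α` of a Lie algebra `g` over `k` such that `g₀` is
abelian, `[g_α, g_β] = g_{α+β}` for all `α ≠ β`, and the grading is the root
space decomposition of `g` with respect to `g₀` (which identifies `ℤⁿ` with a
subset of `g₀^*` via the injective additive map `wt`). -/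
structure GradedLie (k : Type*) [Field k] (n : ℕ)
    (g : Type*) [LieRing g] [LieAlgebra k g] where
  gr : (Fin n → ℤ) → Submodule k g
  isInternal : DirectSum.IsInternal gr
  bracket_le : ∀ (α β : Fin n → ℤ), ∀ x ∈ gr α, ∀ y ∈ gr β, ⁅x, y⁆ ∈ gr (α + β)
  bracket_eq : ∀ (α β : Fin n → ℤ), α ≠ β →
    Submodule.span k {z : g | ∃ x ∈ gr α, ∃ y ∈ gr β, z = ⁅x, y⁆} = gr (α + β)
  abelian : ∀ x ∈ gr 0, ∀ y ∈ gr 0, ⁅x, y⁆ = (0 : g)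
  wt : (Fin n → ℤ) → Module.Dual k ↥(gr 0)
  wt_injective : Function.Injective wt
  wt_add : ∀ α β : Fin n → ℤ, wt (α + β) = wt α + wt β
  rootSpace : ∀ α : Fin n → ℤ,
    (gr α : Set g) = {x : g | ∀ h : ↥(gr 0), ⁅(h : g), x⁆ = wt α h • x}

namespace GradedLie

variable {k : Type*} [Field k] {n : ℕ} {g : Type*} [LieRing g] [LieAlgebra k g]

variable (P : GradedLie k n g)
variable (V : Type*) [AddCommGroup V] [Module k V] [LieRingModule g V] [LieModule k g V]

/-- The weight space of `V` for the weight `lam ∈ g₀^*`. -/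
def weightSpace (lam : Module.Dual k ↥(P.gr 0)) : Submodule k V where
  carrier := {v : V | ∀ h : ↥(P.gr 0), ⁅(h : g), v⁆ = lam h • v}
  add_mem' := by
    intro u v hu hv h
    rw [lie_add, hu h, hv h, smul_add]
  zero_mem' := by intro h; rw [lie_zero, smul_zero]
  smul_mem' := by
    intro a v hv h
    rw [lie_smul, hv h, smul_comm]

/-- The support of `V`: weights with nonzero weight space. -/
def supp : Set (Module.Dual k ↥(P.gr 0)) := {lam | P.weightSpace V lam ≠ ⊥}

/-- `V` is a weight module: it is the sum of its weight spaces. -/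
def IsWeightModule : Prop :=
  ⨆ lam : Module.Dual k ↥(P.gr 0), P.weightSpace V lam = ⊤

/-- Dense: the support is a full coset `lam + ℤⁿ`. -/
def IsDense : Prop :=
  ∃ lam : Module.Dual k ↥(P.gr 0),
    P.supp V = {mu | ∃ x : Fin n → ℤ, mu = lam + P.wt x}

/-- Punctured: the support is `ℤⁿ ∖ {0}`. -/
def IsPunctured : Prop :=
  P.supp V = {mu | ∃ x : Fin n → ℤ, x ≠ 0 ∧ mu = P.wt x}

/-- Trivial module: one–dimensional with zero action. -/
def IsTrivialMod (_P : GradedLie k n g) : Prop :=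
  Module.rank k V = 1 ∧ ∀ (x : g) (v : V), ⁅x, v⁆ = 0

/-- Cut module: the support is contained in a shifted half space
`lam + b + ℤⁿ_{-0}^{(a)}`. -/
def IsCut : Prop :=
  ∃ lam ∈ P.supp V, ∃ a : Fin n → ℝ, a ≠ 0 ∧ ∃ b : Fin n → ℤ,
    ∀ mu ∈ P.supp V, ∃ x : Fin n → ℤ, rdot a x ≤ 0 ∧ mu = lam + P.wt b + P.wt x

/-- Generalized highest weight element with respect to a `ℤ`-basis `f` of `ℤⁿ`. -/
def IsGHW (f : Fin n → (Fin n → ℤ)) (v : V) : Prop :=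
  ∃ N : ℕ, ∀ m : Fin n → ℤ, (∀ i, (N : ℤ) < m i) →
    ∀ x ∈ P.gr (∑ i, m i • f i), ⁅x, v⁆ = 0

/-- Generalized highest weight element with respect to the standard basis of `ℤⁿ`:
`g_γ v = 0` whenever all `γ_i > N`. -/
def IsGHWstd (v : V) : Prop :=
  ∃ N : ℕ, ∀ γ : Fin n → ℤ, (∀ i, (N : ℤ) < γ i) →
    ∀ x ∈ P.gr γ, ⁅x, v⁆ = 0

/-- Mixed module: some weight space in the coset is infinite dimensional and
some is finite dimensional. -/
def IsMixed : Prop :=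
  ∃ lam ∈ P.supp V, ∃ x : Fin n → ℤ,
    ¬ Module.Finite k ↥(P.weightSpace V lam) ∧
      Module.Finite k ↥(P.weightSpace V (lam + P.wt x))

end GradedLie


section AuxRel

/-- Rationality: a rational linear system with a nontrivial real solution has a
nontrivial rational solution (via Gram matrices). -/
private lemma aux_rat_rel {N n : ℕ} (d : Fin N → (Fin n → ℤ)) (J : Finset (Fin N))
    (hJne : J.Nonempty) (a : Fin N → ℝ) (ha : ∀ i ∈ J, 0 < a i)
    (hrel : ∀ j : Fin n, ∑ i ∈ J, a i * (d i j : ℝ) = 0) :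
    ∃ c : Fin N → ℚ, (∃ i ∈ J, c i ≠ 0) ∧ (∀ i, i ∉ J → c i = 0) ∧
      ∀ j : Fin n, ∑ i ∈ J, c i * (d i j : ℚ) = 0 := by
  classical
  set Gq : Matrix J J ℚ := fun p q => ∑ j, (d p.1 j : ℚ) * (d q.1 j : ℚ) with hGq
  set av : J → ℝ := fun p => a p.1 with hav
  have havne : av ≠ 0 := by
    obtain ⟨i0, hi0⟩ := hJne
    intro h
    have h2 := congrFun h ⟨i0, hi0⟩
    exact absurd h2 (ne_of_gt (ha i0 hi0))
  have hmv : (Gq.map (Rat.cast : ℚ → ℝ)).mulVec av = 0 := by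
    funext p
    show ∑ q, (Gq.map (Rat.cast : ℚ → ℝ)) p q * av q = 0
    have hterm : ∀ q : {i // i ∈ J}, (Gq.map (Rat.cast : ℚ → ℝ)) p q * av q
        = ∑ j, (d p.1 j : ℝ) * ((d q.1 j : ℝ) * a q.1) := by
      intro q
      rw [Matrix.map_apply]; simp only [hGq, hav]
      push_cast
      rw [Finset.sum_mul]
      exact Finset.sum_congr rfl fun j _ => by ring
    rw [Finset.sum_congr rfl fun q _ => hterm q, Finset.sum_comm]
    refine Finset.sum_eq_zero fun j _ => ?_
    rw [← Finset.mul_sum]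
    have : ∑ q : {i // i ∈ J}, (d q.1 j : ℝ) * a q.1 = ∑ i ∈ J, (d i j : ℝ) * a i :=
      Finset.sum_coe_sort J (fun i => (d i j : ℝ) * a i)
    rw [this]
    have : ∑ i ∈ J, (d i j : ℝ) * a i = ∑ i ∈ J, a i * (d i j : ℝ) :=
      Finset.sum_congr rfl fun i _ => mul_comm _ _
    rw [this, hrel j, mul_zero]
  have hdetR : (Gq.map (Rat.cast : ℚ → ℝ)).det = 0 :=
    Matrix.exists_mulVec_eq_zero_iff.mp ⟨av, havne, hmv⟩
  have hdetq : Gq.det = 0 := by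
    have h1 := RingHom.map_det (Rat.castHom ℝ) Gq
    rw [RingHom.mapMatrix_apply] at h1
    have h2 : (Gq.map (Rat.castHom ℝ : ℚ → ℝ)).det = 0 := by
      convert hdetR using 2
      rfl
    rw [← h1] at h2
    have h3 : ((Gq.det : ℚ) : ℝ) = 0 := by simpa using h2
    exact_mod_cast h3
  obtain ⟨cJ, hcJne, hcJ⟩ := Matrix.exists_mulVec_eq_zero_iff.mpr hdetq
  -- sum of squares
  set S : Fin n → ℚ := fun j => ∑ q : {i // i ∈ J}, cJ q * (d q.1 j : ℚ) with hS
  have hSS : ∑ j, S j ^ 2 = 0 := by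
    have h1 : ∑ q, cJ q * (Gq.mulVec cJ) q = 0 := by
      rw [hcJ]; simp
    rw [← h1]
    calc ∑ j, S j ^ 2
        = ∑ j, ∑ q : {i // i ∈ J}, ∑ p : {i // i ∈ J},
            (cJ q * (d q.1 j : ℚ)) * (cJ p * (d p.1 j : ℚ)) := by
          refine Finset.sum_congr rfl fun j _ => ?_
          rw [sq, hS, Finset.sum_mul_sum]
      _ = ∑ q : {i // i ∈ J}, ∑ j, ∑ p : {i // i ∈ J},
            (cJ q * (d q.1 j : ℚ)) * (cJ p * (d p.1 j : ℚ)) := Finset.sum_comm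
      _ = ∑ q : {i // i ∈ J}, ∑ p : {i // i ∈ J}, ∑ j,
            (cJ q * (d q.1 j : ℚ)) * (cJ p * (d p.1 j : ℚ)) := by
          exact Finset.sum_congr rfl fun q _ => Finset.sum_comm
      _ = ∑ q, cJ q * (Gq.mulVec cJ) q := by
          refine Finset.sum_congr rfl fun q _ => ?_
          show _ = cJ q * ∑ p, Gq q p * cJ p
          rw [Finset.mul_sum]
          refine Finset.sum_congr rfl fun p _ => ?_
          rw [hGq]
          show ∑ j, (cJ q * (d q.1 j : ℚ)) * (cJ p * (d p.1 j : ℚ))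
              = cJ q * ((∑ j, (d q.1 j : ℚ) * (d p.1 j : ℚ)) * cJ p)
          rw [Finset.sum_mul, Finset.mul_sum]
          exact Finset.sum_congr rfl fun j _ => by ring
  have hSzero : ∀ j, S j = 0 := by
    intro j
    have h2 := (Finset.sum_eq_zero_iff_of_nonneg (fun j _ => sq_nonneg (S j))).mp hSS j
      (Finset.mem_univ j)
    exact pow_eq_zero_iff two_ne_zero |>.mp h2
  refine ⟨fun i => if h : i ∈ J then cJ ⟨i, h⟩ else 0, ?_, ?_, ?_⟩
  · obtain ⟨q, hq⟩ := Function.ne_iff.mp hcJne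
    exact ⟨q.1, q.2, by simpa using hq⟩
  · intro i hi; simp [hi]
  · intro j
    have : ∑ i ∈ J, (if h : i ∈ J then cJ ⟨i, h⟩ else 0) * (d i j : ℚ)
        = ∑ q : {i // i ∈ J}, cJ q * (d q.1 j : ℚ) := by
      rw [← Finset.sum_coe_sort J (fun i => (if h : i ∈ J then cJ ⟨i, h⟩ else 0) * (d i j : ℚ))]
      exact Finset.sum_congr rfl fun q _ => by simp
    rw [this]; exact hSzero j

end AuxRel

private lemma aux_int_of_ratpos {N n : ℕ} (d : Fin N → (Fin n → ℤ)) (J' : Finset (Fin N))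
    (c : Fin N → ℚ) (hpos : ∀ i ∈ J', 0 < c i)
    (hrel : ∀ j, ∑ i ∈ J', c i * (d i j : ℚ) = 0) :
    ∃ m : Fin N → ℕ, (∀ i ∈ J', 0 < m i) ∧ ∀ j, ∑ i ∈ J', (m i : ℤ) * d i j = 0 := by
  classical
  refine ⟨fun i => (c i).num.toNat * ∏ l ∈ J'.erase i, (c l).den, ?_, ?_⟩
  · intro i hi
    have h1 : 0 < (c i).num := Rat.num_pos.mpr (hpos i hi)
    have h2 : 0 < ∏ l ∈ J'.erase i, (c l).den :=
      Finset.prod_pos fun l _ => (c l).pos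
    have h3 : 0 < (c i).num.toNat := by omega
    exact Nat.mul_pos h3 h2
  · intro j
    have key : ∀ i ∈ J', (((c i).num.toNat * ∏ l ∈ J'.erase i, (c l).den : ℕ) : ℚ)
        = c i * ∏ l ∈ J', ((c l).den : ℚ) := by
      intro i hi
      have h1 : (((c i).num.toNat : ℕ) : ℚ) = ((c i).num : ℚ) := by
        have : 0 ≤ (c i).num := le_of_lt (Rat.num_pos.mpr (hpos i hi))
        exact_mod_cast congrArg (fun z : ℤ => (z : ℚ)) (Int.toNat_of_nonneg this)
      have h2 : ((c i).num : ℚ) = c i * ((c i).den : ℚ) := by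
        have hden : ((c i).den : ℚ) ≠ 0 := by
          exact_mod_cast (c i).den_nz
        field_simp [Rat.num_div_den]
        exact (Rat.mul_den_eq_num (c i)).symm
      rw [Nat.cast_mul, Nat.cast_prod, h1, h2,
        ← Finset.mul_prod_erase J' (fun l => ((c l).den : ℚ)) hi]
      ring
    have hq : ∑ i ∈ J', ((((c i).num.toNat * ∏ l ∈ J'.erase i, (c l).den : ℕ) : ℤ) : ℚ)
        * (d i j : ℚ) = 0 := by
      calc ∑ i ∈ J', ((((c i).num.toNat * ∏ l ∈ J'.erase i, (c l).den : ℕ) : ℤ) : ℚ) * (d i j : ℚ)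
          = ∑ i ∈ J', (∏ l ∈ J', ((c l).den : ℚ)) * (c i * (d i j : ℚ)) := by
            refine Finset.sum_congr rfl fun i hi => ?_
            rw [Int.cast_natCast, key i hi]
            ring
        _ = (∏ l ∈ J', ((c l).den : ℚ)) * ∑ i ∈ J', c i * (d i j : ℚ) := by
            rw [Finset.mul_sum]
        _ = 0 := by rw [hrel j, mul_zero]
    exact_mod_cast hq

private lemma aux_caseA {N n : ℕ} (d : Fin N → (Fin n → ℤ)) (J : Finset (Fin N)) (c : Fin N → ℚ)
    (hnn : ∀ i ∈ J, 0 ≤ c i) (hex : ∃ i ∈ J, c i ≠ 0)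
    (hrel : ∀ j, ∑ i ∈ J, c i * (d i j : ℚ) = 0) :
    ∃ J' : Finset (Fin N), J' ⊆ J ∧ J'.Nonempty ∧ ∃ m : Fin N → ℕ,
      (∀ i ∈ J', 0 < m i) ∧ ∀ j, ∑ i ∈ J', (m i : ℤ) * d i j = 0 := by
  classical
  set J' := J.filter (fun i => 0 < c i) with hJ'
  obtain ⟨i0, hi0, hne⟩ := hex
  have hi0' : i0 ∈ J' := Finset.mem_filter.mpr ⟨hi0, lt_of_le_of_ne (hnn i0 hi0) (Ne.symm hne)⟩
  have hrel' : ∀ j, ∑ i ∈ J', c i * (d i j : ℚ) = 0 := by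
    intro j
    have hfil : ∑ i ∈ J', c i * (d i j : ℚ) = ∑ i ∈ J, c i * (d i j : ℚ) := by
      rw [hJ']
      refine Finset.sum_filter_of_ne ?_
      intro i hi hne0
      rcases (hnn i hi).lt_or_eq with h | h
      · exact h
      · exact absurd (by rw [← h, zero_mul]) hne0
    rw [hfil]; exact hrel j
  obtain ⟨m, hm, hmr⟩ := aux_int_of_ratpos d J' c (fun i hi => (Finset.mem_filter.mp hi).2) hrel'
  exact ⟨J', Finset.filter_subset _ _, ⟨i0, hi0'⟩, m, hm, hmr⟩

private lemma aux_exists_int_rel {N n : ℕ} (d : Fin N → (Fin n → ℤ)) (J : Finset (Fin N)) :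
    ∀ a : Fin N → ℝ, (∀ i ∈ J, 0 < a i) → (∀ j : Fin n, ∑ i ∈ J, a i * (d i j : ℝ) = 0) →
    J.Nonempty →
    ∃ J' : Finset (Fin N), J' ⊆ J ∧ J'.Nonempty ∧ ∃ m : Fin N → ℕ,
      (∀ i ∈ J', 0 < m i) ∧ ∀ j, ∑ i ∈ J', (m i : ℤ) * d i j = 0 := by
  classical
  induction J using Finset.strongInduction with
  | _ J ih =>
    intro a ha hrel hJne
    obtain ⟨c, ⟨i0, hi0J, hi00⟩, hczero, hcrel⟩ := aux_rat_rel d J hJne a ha hrel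
    by_cases hnn : ∀ i ∈ J, 0 ≤ c i
    · exact aux_caseA d J c hnn ⟨i0, hi0J, hi00⟩ hcrel
    by_cases hnp : ∀ i ∈ J, c i ≤ 0
    · refine aux_caseA d J (-c) (fun i hi => neg_nonneg.mpr (hnp i hi))
        ⟨i0, hi0J, by simpa using hi00⟩ (fun j => ?_)
      have := hcrel j
      simp only [Pi.neg_apply, neg_mul]
      rw [Finset.sum_neg_distrib, this, neg_zero]
    -- mixed case
    push_neg at hnn hnp
    obtain ⟨im, himJ, him⟩ := hnn
    obtain ⟨ip, hipJ, hip⟩ := hnp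
    set Jneg := J.filter (fun i => c i < 0) with hJneg
    have hJnegne : Jneg.Nonempty := ⟨im, Finset.mem_filter.mpr ⟨himJ, him⟩⟩
    set tst := Jneg.inf' hJnegne (fun i => a i / (-(c i : ℝ))) with htst
    have htpos : 0 < tst := by
      rw [htst, Finset.lt_inf'_iff]
      intro i hi
      have hci : (c i : ℝ) < 0 := by exact_mod_cast (Finset.mem_filter.mp hi).2
      exact div_pos (ha i (Finset.mem_filter.mp hi).1) (by linarith)
    set a' : Fin N → ℝ := fun i => a i + tst * (c i : ℝ) with ha'
    have ha'nonneg : ∀ i ∈ J, 0 ≤ a' i := by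
      intro i hi
      rcases lt_or_ge (c i) 0 with hci | hci
      · have hiJn : i ∈ Jneg := Finset.mem_filter.mpr ⟨hi, hci⟩
        have hle : tst ≤ a i / (-(c i : ℝ)) := Finset.inf'_le _ hiJn
        have hcir : (c i : ℝ) < 0 := by exact_mod_cast hci
        have h2 := (le_div_iff₀ (by linarith : (0:ℝ) < -(c i : ℝ))).mp hle
        simp only [ha']
        nlinarith
      · have hcir : (0:ℝ) ≤ (c i : ℝ) := by exact_mod_cast hci
        have := ha i hi
        simp only [ha']
        nlinarith
    obtain ⟨i1, hi1mem, hi1eq⟩ := Finset.exists_mem_eq_inf' hJnegne (fun i => a i / (-(c i : ℝ)))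
    have hci1 : (c i1 : ℝ) < 0 := by exact_mod_cast (Finset.mem_filter.mp hi1mem).2
    have hai1 : a' i1 = 0 := by
      have hcne : (c i1 : ℝ) ≠ 0 := ne_of_lt hci1
      show a i1 + tst * (c i1 : ℝ) = 0
      rw [htst, hi1eq]
      rw [div_mul_eq_mul_div, div_neg, mul_comm]
      field_simp
      ring
    set J2 := J.filter (fun i => 0 < a' i) with hJ2
    have hsub2 : J2 ⊆ J := Finset.filter_subset _ _
    have hi1J : i1 ∈ J := (Finset.mem_filter.mp hi1mem).1
    have hi1nJ2 : i1 ∉ J2 := by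
      intro hmem
      have := (Finset.mem_filter.mp hmem).2
      rw [hai1] at this
      exact lt_irrefl 0 this
    have hss : J2 ⊂ J := (Finset.ssubset_iff_of_subset hsub2).mpr ⟨i1, hi1J, hi1nJ2⟩
    have hJ2ne : J2.Nonempty := by
      refine ⟨ip, Finset.mem_filter.mpr ⟨hipJ, ?_⟩⟩
      have hcipr : (0:ℝ) < (c ip : ℝ) := by exact_mod_cast hip
      have := ha ip hipJ
      simp only [ha']
      nlinarith
    have hrel2 : ∀ j, ∑ i ∈ J2, a' i * (d i j : ℝ) = 0 := by
      intro j
      have hzero_out : ∀ i ∈ J, i ∉ J2 → a' i * (d i j : ℝ) = 0 := by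
        intro i hi hni
        have h1 : ¬ 0 < a' i := fun h => hni (Finset.mem_filter.mpr ⟨hi, h⟩)
        rw [le_antisymm (not_lt.mp h1) (ha'nonneg i hi), zero_mul]
      rw [Finset.sum_subset hsub2 hzero_out]
      have hc0 : ∑ i ∈ J, (c i : ℝ) * (d i j : ℝ) = 0 := by
        have h4 : ((∑ i ∈ J, c i * (d i j : ℚ) : ℚ) : ℝ) = 0 := by
          rw [hcrel j]; norm_num
        push_cast at h4
        exact h4
      calc ∑ i ∈ J, a' i * (d i j : ℝ)
          = (∑ i ∈ J, a i * (d i j : ℝ)) + tst * ∑ i ∈ J, (c i : ℝ) * (d i j : ℝ) := by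
            rw [Finset.mul_sum, ← Finset.sum_add_distrib]
            refine Finset.sum_congr rfl fun i _ => ?_
            simp only [ha']
            ring
        _ = 0 := by rw [hrel j, hc0]; ring
    obtain ⟨J', hJ'sub, hJ'ne, m, hmm, hmr⟩ :=
      ih J2 hss a' (fun i hi => (Finset.mem_filter.mp hi).2) hrel2 hJ2ne
    exact ⟨J', hJ'sub.trans hsub2, hJ'ne, m, hmm, hmr⟩


private lemma pair_of_multiset {n : ℕ} (Rp : (Fin n → ℤ) → Prop)
    (hclose : ∀ γ δ : Fin n → ℤ, γ ≠ δ → Rp γ → Rp δ → Rp (γ + δ))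
    (M : Multiset (Fin n → ℤ)) :
    ∀ s : Fin n → ℤ, (∀ c ∈ M, Rp c ∧ c ≠ 0) → Rp s → s ≠ 0 → s + M.sum = 0 →
      ∃ γ : Fin n → ℤ, γ ≠ 0 ∧ Rp γ ∧ Rp (-γ) := by
  induction M using Multiset.strongInductionOn with
  | _ M ih =>
    intro s hM hRs hs0 hsum
    by_cases hME : M = 0
    · subst hME
      rw [Multiset.sum_zero, add_zero] at hsum
      exact absurd hsum hs0
    by_cases hA : ∃ c' ∈ M, s + c' = 0
    · obtain ⟨c', hc', hcc⟩ := hA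
      refine ⟨c', (hM c' hc').2, (hM c' hc').1, ?_⟩
      have hns : -c' = s := by
        have := neg_eq_of_add_eq_zero_left hcc
        rw [← this]
      rw [hns]
      exact hRs
    · push_neg at hA
      by_cases hall : ∀ c' ∈ M, c' = s
      · exfalso
        have hMrep : M = Multiset.replicate (Multiset.card M) s :=
          Multiset.eq_replicate_card.mpr hall
        rw [hMrep, Multiset.sum_replicate] at hsum
        apply hs0
        funext j
        have hj := congrFun hsum j
        simp only [Pi.add_apply, Pi.smul_apply, Pi.zero_apply, nsmul_eq_mul, Pi.mul_apply,
          Pi.natCast_apply, smul_eq_mul] at hj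
        have h2 : ((Multiset.card M : ℤ) + 1) * s j = 0 := by linear_combination hj
        rcases mul_eq_zero.mp h2 with h | h
        · exfalso; omega
        · exact h
      · push_neg at hall
        obtain ⟨c', hc', hcs⟩ := hall
        have hRs' : Rp (s + c') := hclose s c' (Ne.symm hcs) hRs (hM c' hc').1
        have hssum : (s + c') + (M.erase c').sum = 0 := by
          have h3 : c' + (M.erase c').sum = M.sum := by
            conv_rhs => rw [← Multiset.cons_erase hc']
            rw [Multiset.sum_cons]
          rw [add_assoc, h3]
          exact hsum
        exact ih (M.erase c') (Multiset.erase_lt.mpr hc') (s + c')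
          (fun w hw => hM w (Multiset.mem_of_mem_erase hw)) hRs' (hA c' hc') hssum


namespace GradedLie

variable {k : Type*} [Field k] {n : ℕ} {g : Type*} [LieRing g] [LieAlgebra k g]
variable (P : GradedLie k n g)
variable (V : Type*) [AddCommGroup V] [Module k V] [LieRingModule g V] [LieModule k g V]

attribute [local instance] LieRing.ofAssociativeRing

private lemma mem_weightSpace_iff' {lam : Module.Dual k ↥(P.gr 0)} {v : V} :
    v ∈ P.weightSpace V lam ↔ ∀ h : ↥(P.gr 0), ⁅(h : g), v⁆ = lam h • v := Iff.rfl

private lemma lie_mem_wt {α : Fin n → ℤ} {z : g} (hz : z ∈ P.gr α)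
    {lam : Module.Dual k ↥(P.gr 0)} {v : V} (hv : v ∈ P.weightSpace V lam) :
    ⁅z, v⁆ ∈ P.weightSpace V (lam + P.wt α) := by
  rw [mem_weightSpace_iff']
  intro hh
  have hzx : ⁅(hh : g), z⁆ = P.wt α hh • z := by
    have h2 : z ∈ {w : g | ∀ h : ↥(P.gr 0), ⁅(h : g), w⁆ = P.wt α h • w} := by
      rw [← P.rootSpace α]; exact hz
    exact h2 hh
  have hv' := (P.mem_weightSpace_iff' V).mp hv
  calc ⁅(hh : g), ⁅z, v⁆⁆ = ⁅⁅(hh : g), z⁆, v⁆ + ⁅z, ⁅(hh : g), v⁆⁆ := by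
        rw [leibniz_lie]
    _ = P.wt α hh • ⁅z, v⁆ + lam hh • ⁅z, v⁆ := by rw [hzx, hv' hh, smul_lie, lie_smul]
    _ = (lam + P.wt α) hh • ⁅z, v⁆ := by
        rw [← add_smul]
        congr 1
        simp [add_comm]


private theorem aux_fin {ι : Type*} [Fintype ι] [Nonempty ι]
    (μ : Module.Dual k ↥(P.gr 0)) (hμ : μ ≠ 0)
    (dd : ι → (Fin n → ℤ)) (hdd : ∀ i, dd i ≠ 0)
    (m : ι → ℕ) (hm : ∀ i, 0 < m i)
    (hrel : ∑ i, (m i) • dd i = 0)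
    (hfin : ∀ i, Module.Finite k ↥(P.weightSpace V (μ + P.wt (dd i)))) :
    Module.Finite k ↥(P.weightSpace V μ) := by
  classical
  set TE : g →ₗ⁅k⁆ Module.End k V := LieModule.toEnd k g V with hTEdef
  set Gen : Set (Module.End k V) :=
    {f | ∃ i : ι, ∃ z : g, z ∈ P.gr (dd i) ∧ ∃ T : Module.End k V, f = T * TE z} with hGen
  set G : Submodule k (Module.End k V) := Submodule.span k Gen with hG
  have hleft : ∀ T : Module.End k V, ∀ f ∈ G, T * f ∈ G := by
    intro T f hf
    induction hf using Submodule.span_induction with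
    | mem w hw =>
      obtain ⟨i, z, hz, T', rfl⟩ := hw
      exact Submodule.subset_span ⟨i, z, hz, T * T', (mul_assoc _ _ _).symm⟩
    | zero =>
      rw [mul_zero]; exact Submodule.zero_mem G
    | add f₁ f₂ h₁ h₂ ih₁ ih₂ =>
      rw [mul_add]; exact Submodule.add_mem G ih₁ ih₂
    | smul a f₁ h₁ ih =>
      rw [mul_smul_comm]; exact Submodule.smul_mem G a ih
  have hbase : ∀ i : ι, ∀ z ∈ P.gr (dd i), TE z ∈ G := fun i z hz =>
    Submodule.subset_span ⟨i, z, hz, 1, (one_mul _).symm⟩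
  have hclose : ∀ γ δ : Fin n → ℤ, γ ≠ δ → (∀ z ∈ P.gr γ, TE z ∈ G) →
      (∀ z ∈ P.gr δ, TE z ∈ G) → ∀ z ∈ P.gr (γ + δ), TE z ∈ G := by
    intro γ δ hne hγ hδ z hz
    rw [← P.bracket_eq γ δ hne] at hz
    induction hz using Submodule.span_induction with
    | mem w hw =>
      obtain ⟨p, hp, q, hq, rfl⟩ := hw
      rw [LieHom.map_lie, Ring.lie_def]
      exact Submodule.sub_mem G (hleft (TE p) _ (hδ q hq)) (hleft (TE q) _ (hγ p hp))
    | zero =>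
      rw [map_zero]; exact Submodule.zero_mem G
    | add u w hu hw ihu ihw =>
      rw [map_add]; exact Submodule.add_mem G ihu ihw
    | smul a u hu ih =>
      rw [map_smul]; exact Submodule.smul_mem G a ih
  -- the pair ±γ with all of `TE (gr ·) ⊆ G`
  have hpair : ∃ γ : Fin n → ℤ, γ ≠ 0 ∧ (∀ z ∈ P.gr γ, TE z ∈ G) ∧
      (∀ z ∈ P.gr (-γ), TE z ∈ G) := by
    set Rp : (Fin n → ℤ) → Prop := fun β => ∀ z ∈ P.gr β, TE z ∈ G with hRp
    set M0 : Multiset (Fin n → ℤ) :=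
      (Finset.univ.val : Multiset ι).bind (fun i => Multiset.replicate (m i) (dd i)) with hM0
    have hM0mem : ∀ c ∈ M0, Rp c ∧ c ≠ 0 := by
      intro c hcm
      rw [hM0, Multiset.mem_bind] at hcm
      obtain ⟨i, _, hci⟩ := hcm
      rw [Multiset.eq_of_mem_replicate hci]
      exact ⟨hbase i, hdd i⟩
    have hM0sum : M0.sum = 0 := by
      have h1 : M0.sum = ∑ i : ι, (m i) • dd i := by
        rw [hM0, Multiset.bind, Multiset.sum_join, Multiset.map_map]
        have h2 : ((Finset.univ.val : Multiset ι).map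
            (fun i => (Multiset.replicate (m i) (dd i)).sum)).sum
            = ((Finset.univ.val : Multiset ι).map (fun i => (m i) • dd i)).sum := by
          congr 1
          exact Multiset.map_congr rfl fun i _ => Multiset.sum_replicate _ _
        exact h2
      rw [h1, hrel]
    obtain ⟨i0⟩ := (inferInstance : Nonempty ι)
    have hc0 : dd i0 ∈ M0 := by
      rw [hM0, Multiset.mem_bind]
      exact ⟨i0, Finset.mem_val.mpr (Finset.mem_univ i0),
        Multiset.mem_replicate.mpr ⟨(hm i0).ne', rfl⟩⟩
    obtain ⟨M1, hM1⟩ := Multiset.exists_cons_of_mem hc0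
    have hM1sum : dd i0 + M1.sum = 0 := by
      rw [← Multiset.sum_cons, ← hM1, hM0sum]
    exact pair_of_multiset Rp hclose M1 (dd i0)
      (fun c hcm => hM0mem c (by rw [hM1]; exact Multiset.mem_cons_of_mem hcm))
      (hbase i0) (hdd i0) hM1sum
  obtain ⟨γ, hγ0, hγ, hγ'⟩ := hpair
  have hγne : γ ≠ -γ := by
    intro hEq
    apply hγ0
    funext j
    have hj := congrFun hEq j
    simp only [Pi.neg_apply] at hj
    simp only [Pi.zero_apply]
    omega
  have h0R : ∀ z ∈ P.gr 0, TE z ∈ G := by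
    have h1 := hclose γ (-γ) hγne hγ hγ'
    rw [add_neg_cancel] at h1
    exact h1
  obtain ⟨hvec, hh⟩ : ∃ hv : ↥(P.gr 0), μ hv ≠ 0 := by
    by_contra hcon
    push_neg at hcon
    exact hμ (LinearMap.ext fun hv => by rw [hcon hv]; rfl)
  have hmemG : TE (hvec : g) ∈ Submodule.span k Gen := h0R _ hvec.2
  obtain ⟨s, co, gens, hsum⟩ := Submodule.mem_span_set'.mp hmemG
  choose idx zf hzf Tf hTf using fun r : Fin s => (gens r).2
  -- the finitely many test maps
  let act : ∀ r : Fin s, ↥(P.weightSpace V μ) →ₗ[k]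
      ↥(P.weightSpace V (μ + P.wt (dd (idx r)))) := fun r =>
    { toFun := fun v => ⟨⁅zf r, (v : V)⁆, P.lie_mem_wt V (hzf r) v.2⟩
      map_add' := fun u w => Subtype.ext (by simp [lie_add])
      map_smul' := fun a u => Subtype.ext (by simp [lie_smul]) }
  let Φ : ↥(P.weightSpace V μ) →ₗ[k]
      (∀ r : Fin s, ↥(P.weightSpace V (μ + P.wt (dd (idx r))))) := LinearMap.pi act
  have hinj : Function.Injective Φ := by
    rw [← LinearMap.ker_eq_bot, LinearMap.ker_eq_bot']
    intro v hv0
    have hz0 : ∀ r : Fin s, ⁅zf r, (v : V)⁆ = 0 := by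
      intro r
      have h1 := congrFun hv0 r
      exact Subtype.ext_iff.mp h1
    have hTEh : TE (hvec : g) (v : V) = 0 := by
      rw [← hsum]
      rw [LinearMap.sum_apply]
      refine Finset.sum_eq_zero fun r _ => ?_
      rw [LinearMap.smul_apply, hTf r]
      have h1 : ((Tf r * TE (zf r)) : Module.End k V) (v : V)
          = Tf r (TE (zf r) (v : V)) := rfl
      rw [h1]
      have h2 : TE (zf r) (v : V) = ⁅zf r, (v : V)⁆ := rfl
      rw [h2, hz0 r, map_zero, smul_zero]
    have hμv : μ hvec • (v : V) = 0 := by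
      have h1 : ⁅(hvec : g), (v : V)⁆ = μ hvec • (v : V) :=
        (P.mem_weightSpace_iff' V).mp v.2 hvec
      have h2 : TE (hvec : g) (v : V) = ⁅(hvec : g), (v : V)⁆ := rfl
      rw [← h1, ← h2, hTEh]
    have hv00 : (v : V) = 0 := by
      rcases smul_eq_zero.mp hμv with h | h
      · exact absurd h hh
      · exact h
    exact Subtype.ext hv00
  haveI hfin' : ∀ r : Fin s, Module.Finite k
      ↥(P.weightSpace V (μ + P.wt (dd (idx r)))) := fun r => hfin (idx r)
  exact Module.Finite.of_injective Φ hinj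


end GradedLie


/-- Convexity for mixed modules: if `μ` is a lattice point
which is a convex combination (inside `ℝⁿ`) of lattice points at which the
weight spaces of a simple mixed module are finite dimensional, then either
`λ + μ` is the zero weight or the weight space at `λ + μ` is also finite
dimensional. -/
theorem graded_mixed_fin_convex
    (k : Type*) [Field k] [IsAlgClosed k] [CharZero k] (n : ℕ) (hn : 0 < n)
    (g : Type*) [LieRing g] [LieAlgebra k g] (P : GradedLie k n g)
    (V : Type*) [AddCommGroup V] [Module k V] [LieRingModule g V] [LieModule k g V]
    (hsimple : IsSimpleOrder (LieSubmodule k g V))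
    (hwt : P.IsWeightModule V)
    (hmix : P.IsMixed V)
    (lam : Module.Dual k ↥(P.gr 0)) (hlam : lam ∈ P.supp V)
    (N : ℕ) (hN : 0 < N) (x : Fin N → (Fin n → ℤ)) (a : Fin N → ℝ)
    (hx : ∀ i, Module.Finite k ↥(P.weightSpace V (lam + P.wt (x i))))
    (hpos : ∀ i, 0 < a i) (hsum : ∑ i, a i = 1)
    (y : Fin n → ℤ) (hy : ∀ j : Fin n, (y j : ℝ) = ∑ i, a i * (x i j : ℝ)) :
    lam + P.wt y = 0 ∨ Module.Finite k ↥(P.weightSpace V (lam + P.wt y)) := by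
  classical
  by_cases hzero : lam + P.wt y = 0
  · exact Or.inl hzero
  right
  set d : Fin N → (Fin n → ℤ) := fun i => x i - y with hd
  by_cases htriv : ∀ i, d i = 0
  · have h1 : x ⟨0, hN⟩ = y := by
      have h2 := htriv ⟨0, hN⟩
      simp only [hd] at h2
      exact sub_eq_zero.mp h2
    have h2 := hx ⟨0, hN⟩
    rwa [h1] at h2
  · push_neg at htriv
    obtain ⟨iw, hiw⟩ := htriv
    set J : Finset (Fin N) := Finset.univ.filter (fun i => d i ≠ 0) with hJ
    have hJne : J.Nonempty := ⟨iw, Finset.mem_filter.mpr ⟨Finset.mem_univ _, hiw⟩⟩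
    have hdJ : ∀ i ∈ J, d i ≠ 0 := fun i hi => (Finset.mem_filter.mp hi).2
    have hrelJ : ∀ j : Fin n, ∑ i ∈ J, a i * (d i j : ℝ) = 0 := by
      intro j
      have hall : ∑ i, a i * (d i j : ℝ) = 0 := by
        have hterm : ∀ i : Fin N, a i * (d i j : ℝ)
            = a i * (x i j : ℝ) - a i * (y j : ℝ) := by
          intro i
          have h3 : d i j = x i j - y j := by simp [hd]
          rw [h3]
          push_cast
          ring
        rw [Finset.sum_congr rfl fun i _ => hterm i, Finset.sum_sub_distrib, ← Finset.sum_mul,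
          hsum, ← hy j, one_mul, sub_self]
      rw [← hall]
      refine Finset.sum_subset ?_ ?_
      · rw [hJ]; exact Finset.filter_subset _ _
      · intro i _ hni
        have h4 : d i = 0 := by
          by_contra hne
          exact hni (by rw [hJ]; exact Finset.mem_filter.mpr ⟨Finset.mem_univ _, hne⟩)
        rw [h4]
        simp
    obtain ⟨J', hJ'sub, hJ'ne, m, hmpos, hintrel⟩ :=
      aux_exists_int_rel d J a (fun i _ => hpos i) hrelJ hJne
    haveI : Nonempty ↥J' := Finset.nonempty_coe_sort.mpr hJ'ne
    have hrel' : ∑ i : ↥J', (m i.1) • d i.1 = 0 := by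
      funext j
      have h5 := hintrel j
      rw [Finset.sum_apply]
      simp only [Pi.smul_apply, nsmul_eq_mul, Pi.zero_apply]
      rw [Finset.sum_coe_sort J' (fun i => (m i : ℤ) * d i j)]
      exact h5
    have hfin' : ∀ i : ↥J',
        Module.Finite k ↥(P.weightSpace V ((lam + P.wt y) + P.wt (d i.1))) := by
      intro i
      have hyx : y + d i.1 = x i.1 := by simp only [hd]; ring
      have harg : (lam + P.wt y) + P.wt (d i.1) = lam + P.wt (x i.1) := by
        rw [add_assoc, ← P.wt_add, hyx]
      rw [harg]
      exact hx i.1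
    exact P.aux_fin V (lam + P.wt y) hzero (fun i : ↥J' => d i.1)
      (fun i => hdJ i.1 (hJ'sub i.2)) (fun i => m i.1) (fun i => hmpos i.1 i.2) hrel' hfin'
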